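/- Let G be a 2-vertex-connected undirected graph and let e be an edge of G with endpoints t1 and t2. Then for every two distinct vertices u and v of G there exist two vertex-disjoint paths (possibly of length zero) from u to t1 and from v to t2 (or from u to t2 and v to t1), i.e., two paths sharing no vertices, connecting {u,v} to the two endpoints of e. -/

import Mathlib

open SimpleGraph

/-- A cycle in `G`: a (finite) connected `2`-regular subgraph. -/
def IsCycleSubgraph {V : Type*} {G : SimpleGraph V} (C : G.Subgraph) : Prop :=
  C.verts.Finite ∧ C.Connected ∧ ∀ v ∈ C.verts, (C.neighborSet v).ncard = 2

open Classical in
/-- The characteristic vector over `𝔽₂` of the edge set of a subgraph. -/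
noncomputable def edgeVec {V : Type*} {G : SimpleGraph V} (C : G.Subgraph) :
    Sym2 V → ZMod 2 :=
  fun e => if e ∈ C.edgeSet then 1 else 0

/-- The cycle space of `G`: the `𝔽₂`-span of the edge vectors of cycles of `G`. -/
noncomputable def cycleSpace {V : Type*} (G : SimpleGraph V) :
    Submodule (ZMod 2) (Sym2 V → ZMod 2) :=
  Submodule.span (ZMod 2) (edgeVec '' {C : G.Subgraph | IsCycleSubgraph C})

/-- A cycle basis of `G`: a set of cycles whose edge vectors form a basis of the
cycle space of `G`. -/
def IsCycleBasis {V : Type*} {G : SimpleGraph V} (B : Set G.Subgraph) : Prop :=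
  (∀ C ∈ B, IsCycleSubgraph C) ∧
  LinearIndependent (ZMod 2) (fun C : B => edgeVec C.1) ∧
  Submodule.span (ZMod 2) (edgeVec '' B) = cycleSpace G

/-- A graph is `2`-vertex-connected if it has at least three vertices and deleting
any single vertex leaves it connected. -/
def TwoConnected {V : Type*} (G : SimpleGraph V) : Prop :=
  3 ≤ Nat.card V ∧ ∀ v : V, (G.induce ({v}ᶜ : Set V)).Connected

namespace Stmt0Aux

variable {V : Type*} {G : SimpleGraph V}

/-- The conclusion of `stmt0`, as a definition. -/
def Linked (G : SimpleGraph V) (t1 t2 u v : V) : Prop :=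
  ∃ (x y : V), ({x, y} : Set V) = {t1, t2} ∧
    ∃ (p : G.Walk u x) (q : G.Walk v y), p.IsPath ∧ q.IsPath ∧
      ∀ w, w ∈ p.support → w ∉ q.support

lemma Linked.symm {t1 t2 u v : V} (h : Linked G t1 t2 u v) : Linked G t1 t2 v u := by
  obtain ⟨x, y, hxy, p, q, hp, hq, hd⟩ := h
  exact ⟨y, x, by rw [Set.pair_comm]; exact hxy, q, p, hq, hp,
    fun z hz hz' => hd z hz' hz⟩

lemma append_isPath' {a r b : V} {p : G.Walk a r} {q : G.Walk r b}
    (hp : p.IsPath) (hq : q.IsPath)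
    (h : ∀ z ∈ p.support, z ∈ q.support → z = r) : (p.append q).IsPath := by
  rw [SimpleGraph.Walk.isPath_def, SimpleGraph.Walk.support_append]
  refine List.Nodup.append ((SimpleGraph.Walk.isPath_def p).mp hp)
    ?_ ?_
  · have := (SimpleGraph.Walk.isPath_def q).mp hq
    rw [q.support_eq_cons] at this
    exact (List.nodup_cons.mp this).2
  · intro z hzp hzq
    have hz : z ∈ q.support := List.mem_of_mem_tail hzq
    have hzr : z = r := h z hzp hz
    subst hzr
    have := (SimpleGraph.Walk.isPath_def q).mp hq
    rw [q.support_eq_cons] at this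
    exact (List.nodup_cons.mp this).1 hzq

lemma eq_mid_of_mem_append {a r b : V} {p : G.Walk a r} {q : G.Walk r b}
    (h : (p.append q).IsPath) {z : V} (hzp : z ∈ p.support) (hzq : z ∈ q.support) : z = r := by
  rw [SimpleGraph.Walk.isPath_def, SimpleGraph.Walk.support_append] at h
  by_contra hne
  have hzt : z ∈ q.support.tail := by
    rw [q.support_eq_cons] at hzq
    rcases List.mem_cons.mp hzq with h' | h'
    · exact absurd h' hne
    · exact h'
  exact (List.disjoint_of_nodup_append h) hzp hzt

lemma exists_path_avoiding (hG : TwoConnected G) (c a b : V) (ha : a ≠ c) (hb : b ≠ c) :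
    ∃ p : G.Walk a b, p.IsPath ∧ c ∉ p.support := by
  classical
  have hconn := hG.2 c
  have haa : a ∈ ({c}ᶜ : Set V) := by simpa using ha
  have hbb : b ∈ ({c}ᶜ : Set V) := by simpa using hb
  obtain ⟨w⟩ := hconn ⟨a, haa⟩ ⟨b, hbb⟩
  let f := (SimpleGraph.Embedding.induce (G := G) ({c}ᶜ : Set V)).toHom
  let w' : G.Walk a b := w.map f
  refine ⟨w'.bypass, w'.bypass_isPath, fun hc => ?_⟩
  have hmem := w'.support_bypass_subset hc
  replace hmem : c ∈ (w.map f).support := hmem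
  rw [SimpleGraph.Walk.support_map] at hmem
  obtain ⟨⟨z, hz⟩, _, hz2⟩ := List.mem_map.mp hmem
  exact hz (by simpa [f] using hz2)

lemma exists_first_hit (S : Set V) {a b : V} (R : G.Walk a b) :
    R.IsPath → b ∈ S → ∃ (r : V) (R' : G.Walk a r), r ∈ S ∧ R'.IsPath ∧
      (∀ z ∈ R'.support, z ∈ R.support) ∧ (∀ z ∈ R'.support, z ∈ S → z = r) := by
  induction R with
  | nil =>
    intro _ hb
    exact ⟨_, SimpleGraph.Walk.nil, hb, SimpleGraph.Walk.IsPath.nil,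
      fun z hz => hz, fun z hz _ => by simpa using hz⟩
  | @cons a' c' b' hadj p ih =>
    intro hR hb
    by_cases haS : a' ∈ S
    · exact ⟨a', SimpleGraph.Walk.nil, haS, SimpleGraph.Walk.IsPath.nil,
        fun z hz => by simp at hz; simp [hz],
        fun z hz _ => by simpa using hz⟩
    · obtain ⟨r, R', hrS, hR'p, hsub, hfirst⟩ :=
        ih ((SimpleGraph.Walk.cons_isPath_iff _ _).mp hR).1 hb
      have hap : a' ∉ p.support := ((SimpleGraph.Walk.cons_isPath_iff _ _).mp hR).2
      refine ⟨r, SimpleGraph.Walk.cons hadj R', hrS, ?_, ?_, ?_⟩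
      · exact hR'p.cons (fun h => hap (hsub a' h))
      · intro z hz
        rw [SimpleGraph.Walk.support_cons] at hz ⊢
        rcases List.mem_cons.mp hz with h | h
        · exact List.mem_cons.mpr (Or.inl h)
        · exact List.mem_cons.mpr (Or.inr (hsub z h))
      · intro z hz hzS
        rw [SimpleGraph.Walk.support_cons] at hz
        rcases List.mem_cons.mp hz with h | h
        · subst h; exact absurd hzS haS
        · exact hfirst z h hzS

lemma connected_of (hG : TwoConnected G) : G.Connected := by
  have hcard := hG.1
  have hpos : 0 < Nat.card V := by omega
  have hne : Nonempty V := (Nat.card_pos_iff.mp hpos).1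
  rw [SimpleGraph.connected_iff]
  refine ⟨fun a b => ?_, hne⟩
  obtain ⟨c, hca, hcb⟩ : ∃ c, c ≠ a ∧ c ≠ b := by
    by_contra hcon
    push_neg at hcon
    have hall : ∀ c : V, c = a ∨ c = b := by
      intro c
      by_cases h : c = a
      · exact Or.inl h
      · exact Or.inr (hcon c h)
    have hsub : (Set.univ : Set V) ⊆ ({a, b} : Set V) := by
      intro c _
      rcases hall c with rfl | rfl <;> simp
    have h1 : Nat.card V ≤ 2 := by
      have := Set.ncard_le_ncard hsub (Set.toFinite _)
      rw [Set.ncard_univ] at this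
      refine this.trans ?_
      refine (Set.ncard_insert_le _ _).trans ?_
      simp
    omega
  have hconn := hG.2 c
  have hr := hconn ⟨a, by simpa using hca.symm⟩ ⟨b, by simpa using hcb.symm⟩
  exact hr.map (SimpleGraph.Embedding.induce (G := G) ({c}ᶜ : Set V)).toHom

lemma Linked.flip {t1 t2 u v : V} (h : Linked G t2 t1 u v) : Linked G t1 t2 u v := by
  obtain ⟨x, y, hxy, p, q, hp, hq, hd⟩ := h
  exact ⟨x, y, by rw [hxy, Set.pair_comm], p, q, hp, hq, hd⟩

lemma base' (hG : TwoConnected G) {t1 t2 u : V} (hne12 : t1 ≠ t2) (hne : u ≠ t2) :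
    Linked G t1 t2 u t2 := by
  obtain ⟨p, hp, hps⟩ : ∃ p : G.Walk u t1, p.IsPath ∧ t2 ∉ p.support := by
    by_cases hu : u = t1
    · refine ⟨SimpleGraph.Walk.nil.copy hu.symm rfl, by simp, ?_⟩
      rw [SimpleGraph.Walk.support_copy, SimpleGraph.Walk.support_nil]
      simp [hne12.symm]
    · exact exists_path_avoiding hG t2 u t1 hne hne12
  refine ⟨t1, t2, rfl, p, SimpleGraph.Walk.nil, hp, SimpleGraph.Walk.IsPath.nil, ?_⟩
  intro z hz hz2
  simp only [SimpleGraph.Walk.support_nil, List.mem_singleton] at hz2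
  subst hz2
  exact hps hz

lemma base (hG : TwoConnected G) {t1 t2 : V} (hne12 : t1 ≠ t2) (u v : V) (hne : u ≠ v)
    (hv : v = t1 ∨ v = t2) : Linked G t1 t2 u v := by
  rcases hv with h | h
  · rw [h] at hne ⊢
    exact (base' hG hne12.symm hne).flip
  · rw [h] at hne ⊢
    exact base' hG hne12 hne

lemma main (hG : TwoConnected G) {t1 t2 : V} (hconn : G.Connected) (hne12 : t1 ≠ t2) :
    ∀ n : ℕ, ∀ v u : V, u ≠ v → min (G.dist t1 v) (G.dist t2 v) ≤ n →
      Linked G t1 t2 u v := by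
  classical
  intro n
  induction n with
  | zero =>
    intro v u hne hm
    have hmin : min (G.dist t1 v) (G.dist t2 v) = 0 := Nat.le_zero.mp hm
    rcases Nat.min_eq_zero_iff.mp hmin with h0 | h0
    · exact base hG hne12 u v hne (Or.inl (hconn.dist_eq_zero_iff.mp h0).symm)
    · exact base hG hne12 u v hne (Or.inr (hconn.dist_eq_zero_iff.mp h0).symm)
  | succ n ih =>
    intro v u hne hm
    by_cases hv1 : v = t1
    · exact base hG hne12 u v hne (Or.inl hv1)
    by_cases hv2 : v = t2
    · exact base hG hne12 u v hne (Or.inr hv2)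
    -- choose the closer endpoint t
    obtain ⟨t, ht, htmin⟩ : ∃ t, (t = t1 ∨ t = t2) ∧
        G.dist t v = min (G.dist t1 v) (G.dist t2 v) := by
      rcases min_cases (G.dist t1 v) (G.dist t2 v) with ⟨h, _⟩ | ⟨h, _⟩
      · exact ⟨t1, Or.inl rfl, h.symm⟩
      · exact ⟨t2, Or.inr rfl, h.symm⟩
    have hvt : v ≠ t := by
      rintro rfl
      rcases ht with rfl | rfl
      · exact hv1 rfl
      · exact hv2 rfl
    obtain ⟨W, hWlen⟩ := hconn.exists_walk_length_eq_dist t v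
    obtain ⟨w, hadj, W2, hW2⟩ := SimpleGraph.Walk.exists_eq_cons_of_ne hvt W.reverse
    have hlen : W2.length + 1 = G.dist t v := by
      have : W.reverse.length = G.dist t v := by rw [SimpleGraph.Walk.length_reverse, hWlen]
      rw [hW2, SimpleGraph.Walk.length_cons] at this
      exact this
    have hdw : G.dist t w ≤ n := by
      have h1 : G.dist w t ≤ W2.length := SimpleGraph.dist_le W2
      have h2 : G.dist t v ≤ n + 1 := htmin ▸ hm
      rw [SimpleGraph.dist_comm] at h1
      omega
    have hmw : min (G.dist t1 w) (G.dist t2 w) ≤ n := by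
      rcases ht with rfl | rfl
      · exact le_trans (min_le_left _ _) hdw
      · exact le_trans (min_le_right _ _) hdw
    by_cases hwu : w = u
    · subst hwu
      exact (ih w v hne.symm hmw).symm
    -- main case
    obtain ⟨x, y, hxy, p, q, hp, hq, hdisj⟩ := ih w u (fun h => hwu h.symm) hmw
    have hx : x = t1 ∨ x = t2 := by
      have : x ∈ ({t1, t2} : Set V) := hxy ▸ (by simp : x ∈ ({x, y} : Set V))
      simpa using this
    have hxv : x ≠ v := by
      rcases hx with rfl | rfl
      · exact fun h => hv1 h.symm
      · exact fun h => hv2 h.symm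
    by_cases hvq : v ∈ q.support
    · exact ⟨x, y, hxy, p, q.dropUntil v hvq, hp, hq.dropUntil hvq,
        fun z hzp hzq => hdisj z hzp (q.support_dropUntil_subset hvq hzq)⟩
    by_cases hvp : v ∈ p.support
    · -- v lies on p
      set s : G.Walk v x := p.dropUntil v hvp with hs_def
      have hs : s.IsPath := hp.dropUntil hvp
      have hssub : ∀ z ∈ s.support, z ∈ p.support :=
        fun z hz => p.support_dropUntil_subset hvp hz
      have hpdecomp : ((p.takeUntil v hvp).append s).IsPath := by
        rw [hs_def, p.take_spec hvp]; exact hp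
      have hus : u ∉ s.support := by
        intro hus
        exact hne (eq_mid_of_mem_append hpdecomp
          (p.takeUntil v hvp).start_mem_support hus)
      by_cases huq : u ∈ q.support
      · exact ⟨y, x, by rw [Set.pair_comm]; exact hxy, q.dropUntil u huq, s,
          hq.dropUntil huq, hs,
          fun z hz1 hz2 => hdisj z (hssub z hz2) (q.support_dropUntil_subset huq hz1)⟩
      · -- u on neither q nor (strictly) s; route u to x avoiding v, first hit of s ∪ q
        obtain ⟨R, hRp, hRv⟩ := exists_path_avoiding hG v u x hne hxv
        set S : Set V := {z | z ∈ s.support ∨ z ∈ q.support} with hS_def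
        have hbS : x ∈ S := Or.inl s.end_mem_support
        obtain ⟨r, R', hrS, hR'p, hR'sub, hfirst⟩ := exists_first_hit S R hRp hbS
        have hR'v : v ∉ R'.support := fun h => hRv (hR'sub v h)
        have hrv : r ≠ v := fun h => hR'v (h ▸ R'.end_mem_support)
        rcases hrS with hrs | hrq
        · -- first hit lies on s : keep (u → r → x), send v via w along q
          have hrq' : r ∉ q.support := fun h => hdisj r (hssub r hrs) h
          refine ⟨x, y, hxy, R'.append (s.dropUntil r hrs), SimpleGraph.Walk.cons hadj q,
            ?_, hq.cons hvq, ?_⟩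
          · exact append_isPath' hR'p (hs.dropUntil hrs)
              (fun z hz hzd => hfirst z hz (Or.inl (s.support_dropUntil_subset hrs hzd)))
          · intro z hz hz'
            rw [SimpleGraph.Walk.mem_support_append_iff] at hz
            rw [SimpleGraph.Walk.support_cons] at hz'
            rcases List.mem_cons.mp hz' with rfl | hzq
            · rcases hz with h | h
              · exact hR'v h
              · have hzs : z ∈ s.support := s.support_dropUntil_subset hrs h
                have hsdecomp : ((s.takeUntil r hrs).append (s.dropUntil r hrs)).IsPath := by
                  rw [s.take_spec hrs]; exact hs
                exact hrv (eq_mid_of_mem_append hsdecomp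
                  (s.takeUntil r hrs).start_mem_support h).symm
            · rcases hz with h | h
              · have : z = r := hfirst z h (Or.inr hzq)
                subst this
                exact hrq' hzq
              · exact hdisj z (hssub z (s.support_dropUntil_subset hrs h)) hzq
        · -- first hit lies on q : send u to y along q, v keeps s to x
          have hrs' : r ∉ s.support := fun h => hdisj r (hssub r h) hrq
          refine ⟨y, x, by rw [Set.pair_comm]; exact hxy,
            R'.append (q.dropUntil r hrq), s, ?_, hs, ?_⟩
          · exact append_isPath' hR'p (hq.dropUntil hrq)
              (fun z hz hzd => hfirst z hz (Or.inr (q.support_dropUntil_subset hrq hzd)))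
          · intro z hz hzs
            rw [SimpleGraph.Walk.mem_support_append_iff] at hz
            rcases hz with h | h
            · have : z = r := hfirst z h (Or.inl hzs)
              subst this
              exact hrs' hzs
            · exact hdisj z (hssub z hzs) (q.support_dropUntil_subset hrq h)
    · -- v on neither p nor q: just prepend edge v-w to q
      exact ⟨x, y, hxy, p, SimpleGraph.Walk.cons hadj q, hp, hq.cons hvq,
        fun z hzp hzq => by
          rw [SimpleGraph.Walk.support_cons] at hzq
          rcases List.mem_cons.mp hzq with rfl | h
          · exact hvp hzp
          · exact hdisj z hzp h⟩

end Stmt0Aux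

/-- In a 2-vertex-connected graph `G` with an edge `{t1,t2}`,
every two distinct vertices `u, v` can be joined to the two endpoints of the edge
by two vertex-disjoint paths. -/
theorem stmt0 {V : Type*} (G : SimpleGraph V) (t1 t2 : V) (he : G.Adj t1 t2)
    (hG : TwoConnected G) (u v : V) (huv : u ≠ v) :
    ∃ (x y : V), ({x, y} : Set V) = {t1, t2} ∧
      ∃ (p : G.Walk u x) (q : G.Walk v y), p.IsPath ∧ q.IsPath ∧
        ∀ w, w ∈ p.support → w ∉ q.support := by
  have hconn := Stmt0Aux.connected_of hG
  exact Stmt0Aux.main hG hconn he.ne (min (G.dist t1 v) (G.dist t2 v)) v u huv le_rfl
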